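/- Let P, Q ∈ GL⁺(H) be such that P, Q and the frame operator S_Λ pairwise commute. If (Λ_w)_{w∈Ω} is a (P, Q)-controlled continuous g-frame with bounds A and B, then (Λ_w)_{w∈Ω} is a continuous g-frame with lower bound A/‖(PQ)^{1/2}‖² and upper bound B·‖(PQ)^{-1/2}‖², i.e. (A/‖(PQ)^{1/2}‖²)·‖f‖² ≤ ∫_Ω ‖Λ_w f‖² dμ(w) ≤ B·‖(PQ)^{-1/2}‖²·‖f‖² for every f ∈ H. -/

import Mathlib

open MeasureTheory StarAlgebra
open scoped ComplexInnerProductSpace NNReal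

lemma my_commute_of_mem_elemental {A : Type*} [CStarAlgebra A] {s a u : A}
    (h : Commute s a) (hstar : Commute s (star a)) (hu : u ∈ elemental ℂ a) :
    Commute s u := by
  induction hu using elemental.induction_on with
  | self => exact h
  | star_self => exact hstar
  | algebraMap r => exact (Algebra.commutes r s).symm
  | add u hu v hv hu' hv' => exact hu'.add_right hv'
  | mul u hu v hv hu' hv' => exact hu'.mul_right hv'
  | closure t hts hP v hv =>
      have hcl : IsClosed {x : A | Commute s x} :=
        isClosed_eq (continuous_mul_left s) (continuous_mul_right s)
      exact hcl.closure_subset_iff.mpr (fun x hx => hP x hx) hv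

lemma my_cfc_mem_elemental {A : Type*} [CStarAlgebra A] (f : ℂ → ℂ) (a : A) :
    cfc f a ∈ elemental ℂ a := by
  refine cfc_cases (· ∈ elemental ℂ a) a f (zero_mem _) fun hf ha => ?_
  rw [@cfcHom_eq_of_isStarNormal _ _ a ha]
  exact SetLike.coe_mem _

lemma my_commute_sqrt {A : Type*} [CStarAlgebra A] [PartialOrder A] [StarOrderedRing A]
    {s a : A} (ha : 0 ≤ a) (h : Commute s a) : Commute s (CFC.sqrt a) := by
  have hsa : IsSelfAdjoint a := .of_nonneg ha
  rw [CFC.sqrt_eq_cfc, cfc_nnreal_eq_real _ a ha, cfc_real_eq_complex _ hsa]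
  exact my_commute_of_mem_elemental h (hsa.star_eq.symm ▸ h) (my_cfc_mem_elemental _ a)

set_option maxHeartbeats 1000000 in
set_option synthInstance.maxHeartbeats 200000 in
/-- If `(Λ_w)` is a `(P, Q)`-controlled continuous g-frame with bounds `A, B`
(where `P, Q ∈ GL⁺(H)` commute with each other and with the frame operator `S_Λ`), then
`(Λ_w)` is a continuous g-frame with bounds `A/‖(PQ)^{1/2}‖²` and `B‖(PQ)^{-1/2}‖²`. -/
theorem controlled_continuous_g_frame_is_continuous_g_frame
    {H L Ω : Type*}
    [NormedAddCommGroup H] [InnerProductSpace ℂ H] [CompleteSpace H]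
    [NormedAddCommGroup L] [InnerProductSpace ℂ L] [CompleteSpace L]
    [MeasurableSpace Ω] (μ : Measure Ω)
    (Λ : Ω → H →L[ℂ] L)
    (hmeas : ∀ f : H, AEStronglyMeasurable (fun w => Λ w f) μ)
    (hint : ∀ f : H, Integrable (fun w => ‖Λ w f‖ ^ 2) μ)
    -- P, Q ∈ GL⁺(H)
    (P Q Pinv Qinv : H →L[ℂ] H)
    (hP : P.IsPositive) (hPinv : P * Pinv = 1 ∧ Pinv * P = 1)
    (hQ : Q.IsPositive) (hQinv : Q * Qinv = 1 ∧ Qinv * Q = 1)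
    -- the frame operator S_Λ
    (SΛ : H →L[ℂ] H)
    (hSΛ : ∀ f g : H, ⟪SΛ f, g⟫ = ∫ w, ⟪Λ w f, Λ w g⟫ ∂μ)
    -- P, Q, S_Λ pairwise commute
    (hPQ : P * Q = Q * P) (hPS : P * SΛ = SΛ * P) (hQS : Q * SΛ = SΛ * Q)
    -- R = (PQ)^{1/2}, the positive square root of PQ, with inverse Rinv = (PQ)^{-1/2}
    (R Rinv : H →L[ℂ] H)
    (hR : R.IsPositive) (hRsq : R * R = P * Q)
    (hRinv : R * Rinv = 1 ∧ Rinv * R = 1)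
    -- (Λ_w) is a (P, Q)-controlled continuous g-frame with bounds A, B
    (A B : ℝ) (hA : 0 < A) (hAB : A ≤ B)
    (hBessel : ∃ B₀ > (0 : ℝ), ∀ f : H, ∫ w, ‖Λ w f‖ ^ 2 ∂μ ≤ B₀ * ‖f‖ ^ 2)
    (hframe : ∀ f : H,
      A * ‖f‖ ^ 2 ≤ (∫ w, ⟪Λ w (P f), Λ w (Q f)⟫ ∂μ).re ∧
      (∫ w, ⟪Λ w (P f), Λ w (Q f)⟫ ∂μ).re ≤ B * ‖f‖ ^ 2) :
    ∀ f : H,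
      A / ‖R‖ ^ 2 * ‖f‖ ^ 2 ≤ ∫ w, ‖Λ w f‖ ^ 2 ∂μ ∧
      ∫ w, ‖Λ w f‖ ^ 2 ∂μ ≤ B * ‖Rinv‖ ^ 2 * ‖f‖ ^ 2 := by
  -- R is nonnegative in the Loewner order
  have hR0 : (0 : H →L[ℂ] H) ≤ R := (ContinuousLinearMap.nonneg_iff_isPositive R).mpr hR
  have hRsa : IsSelfAdjoint R := hR.isSelfAdjoint
  -- P * Q is nonnegative
  have hPQ0 : (0 : H →L[ℂ] H) ≤ P * Q := by
    rw [← hRsq]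
    simpa [hRsa.star_eq] using star_mul_self_nonneg R
  -- SΛ commutes with P * Q
  have hSPQ : Commute SΛ (P * Q) := by
    show SΛ * (P * Q) = P * Q * SΛ
    rw [← mul_assoc, ← hPS, mul_assoc, ← hQS, ← mul_assoc]
  -- SΛ commutes with R
  have hSR : Commute SΛ R := by
    have h1 : CFC.sqrt (P * Q) = R := CFC.sqrt_unique hRsq hR0
    exact h1 ▸ my_commute_sqrt hPQ0 hSPQ
  -- symmetry of Q and R
  have hsymQ := (ContinuousLinearMap.isSelfAdjoint_iff_isSymmetric).mp hQ.isSelfAdjoint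
  have hsymR := (ContinuousLinearMap.isSelfAdjoint_iff_isSymmetric).mp hRsa
  -- ⟪SΛ h, h⟫.re = ∫ ‖Λ w h‖²
  have e3 : ∀ h : H, (⟪SΛ h, h⟫).re = ∫ w, ‖Λ w h‖ ^ 2 ∂μ := by
    intro h
    have heq : ∀ w, ⟪Λ w h, Λ w h⟫ = ((‖Λ w h‖ ^ 2 : ℝ) : ℂ) := by
      intro w
      rw [inner_self_eq_norm_sq_to_K]
      norm_cast
    have : ⟪SΛ h, h⟫ = ((∫ w, ‖Λ w h‖ ^ 2 ∂μ : ℝ) : ℂ) := by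
      rw [hSΛ]
      calc ∫ w, ⟪Λ w h, Λ w h⟫ ∂μ = ∫ w, ((‖Λ w h‖ ^ 2 : ℝ) : ℂ) ∂μ := by simp_rw [heq]
        _ = ((∫ w, ‖Λ w h‖ ^ 2 ∂μ : ℝ) : ℂ) := integral_ofReal
    rw [this]
    exact Complex.ofReal_re _
  -- the controlled expression equals the g-frame expression at R g
  have key : ∀ g : H,
      (∫ w, ⟪Λ w (P g), Λ w (Q g)⟫ ∂μ).re = ∫ w, ‖Λ w (R g)‖ ^ 2 ∂μ := by
    intro g
    have hop : Q * SΛ * P = R * SΛ * R := by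
      rw [hQS, mul_assoc, ← hPQ, ← hRsq, ← mul_assoc, hSR.eq]
    have happ : Q (SΛ (P g)) = R (SΛ (R g)) := by
      have := DFunLike.congr_fun hop g
      simpa [ContinuousLinearMap.mul_apply] using this
    have e2 : ⟪SΛ (P g), Q g⟫ = ⟪SΛ (R g), R g⟫ := by
      calc ⟪SΛ (P g), Q g⟫ = ⟪Q (SΛ (P g)), g⟫ := (hsymQ _ _).symm
        _ = ⟪R (SΛ (R g)), g⟫ := by rw [happ]
        _ = ⟪SΛ (R g), R g⟫ := hsymR _ _
    rw [← hSΛ, e2, e3]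
  intro f
  have hfix : R (Rinv f) = f := by
    have := DFunLike.congr_fun hRinv.1 f
    simpa [ContinuousLinearMap.mul_apply] using this
  have h1 := (hframe (Rinv f)).1
  have h2 := (hframe (Rinv f)).2
  rw [key (Rinv f), hfix] at h1 h2
  constructor
  · -- lower bound
    refine le_trans ?_ h1
    by_cases hRn : ‖R‖ = 0
    · have : f = 0 := by
        rw [← hfix, show R = 0 from norm_eq_zero.mp hRn]
        simp
      simp [this, hRn]
    · have hn : 0 < ‖R‖ := lt_of_le_of_ne (norm_nonneg R) (Ne.symm hRn)
      have hle : ‖f‖ ≤ ‖R‖ * ‖Rinv f‖ := by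
        conv_lhs => rw [← hfix]
        exact R.le_opNorm _
      rw [div_mul_eq_mul_div, div_le_iff₀ (by positivity)]
      nlinarith [mul_self_le_mul_self (norm_nonneg f) hle, norm_nonneg (Rinv f),
        norm_nonneg f, hA.le]
  · -- upper bound
    refine h2.trans ?_
    have hB : (0 : ℝ) < B := lt_of_lt_of_le hA hAB
    have hle : ‖Rinv f‖ ≤ ‖Rinv‖ * ‖f‖ := Rinv.le_opNorm f
    nlinarith [mul_self_le_mul_self (norm_nonneg (Rinv f)) hle, norm_nonneg f,
      norm_nonneg Rinv, hB.le]
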